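/- arXiv:1303.2705 — 6 statements merged into one kernel-verified Lean document; each statement's English description precedes it below -/
import Mathlib

section
/- For each n ∈ ℕ let f_n : ℕⁿ → ℕ be an arbitrary function. Then there exists a Borel probability measure σ on ℕ such that, with respect to the infinite product measure σ^ℕ on the sequence space ℕ^ℕ, almost every sequence (k_n)_{n∈ℕ} satisfies k_n ≥ f_n(k_0, …, k_{n−1}) for infinitely many n ∈ ℕ. -/
open MeasureTheory
open scoped ENNReal Classical

noncomputable section SuddenAuxSection

namespace SuddenAux

/-! ### Binary digits of reals -/

/-- floor of `x * 2^q` -/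
def nfl (q : ℕ) (x : ℝ) : ℕ := ⌊x * 2 ^ q⌋₊

/-- the `p`-th binary digit of `x` -/
def bit (x : ℝ) (p : ℕ) : ℕ := nfl (p + 1) x % 2

lemma bit_le_one (x : ℝ) (p : ℕ) : bit x p ≤ 1 :=
  Nat.lt_succ_iff.mp (Nat.mod_lt _ (by norm_num))

lemma nfl_div (x : ℝ) (p : ℕ) : nfl p x = nfl (p + 1) x / 2 := by
  unfold nfl
  rw [show x * 2 ^ p = (x * 2 ^ (p+1)) / ((2:ℕ):ℝ) by push_cast; ring, Nat.floor_div_natCast]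

lemma nfl_succ (x : ℝ) (p : ℕ) : nfl (p + 1) x = 2 * nfl p x + bit x p := by
  rw [nfl_div x p]; unfold bit; omega

/-- value of a binary word -/
def cval (w : ℕ → ℕ) : ℕ → ℕ
  | 0 => 0
  | q + 1 => 2 * cval w q + w q

lemma cval_lt (w : ℕ → ℕ) (hw : ∀ p, w p ≤ 1) : ∀ q, cval w q < 2 ^ q
  | 0 => by simp [cval]
  | q + 1 => by
      have := cval_lt w hw q
      have := hw q
      have : 2 * cval w q + w q < 2 * 2 ^ q := by omega
      simpa [cval, pow_succ, mul_comm] using this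

lemma nfl_zero (x : ℝ) (hx0 : 0 ≤ x) (hx1 : x < 1) : nfl 0 x = 0 := by
  unfold nfl
  rw [pow_zero, mul_one]
  exact Nat.floor_eq_zero.2 hx1

/-- digits determine the floor value -/
lemma word_iff (x : ℝ) (hx0 : 0 ≤ x) (hx1 : x < 1) (w : ℕ → ℕ) (hw : ∀ p, w p ≤ 1) :
    ∀ q, (∀ p < q, bit x p = w p) ↔ nfl q x = cval w q
  | 0 => by simp [nfl_zero x hx0 hx1, cval]
  | q + 1 => by
      have IH := word_iff x hx0 hx1 w hw q
      constructor
      · intro h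
        have h1 : nfl q x = cval w q := IH.1 fun p hp => h p (by omega)
        rw [nfl_succ, h1, h q (by omega)]; rfl
      · intro h
        have hs := nfl_succ x q
        rw [h] at hs
        have hb := bit_le_one x q
        have hwq := hw q
        have h2 : cval w (q+1) = 2 * cval w q + w q := rfl
        rw [h2] at hs
        have hq : nfl q x = cval w q ∧ bit x q = w q := by omega
        intro p hp
        rcases Nat.lt_or_ge p q with h' | h'
        · exact (IH.2 hq.1) p h'
        · have : p = q := by omega
          rw [this]; exact hq.2

lemma vol_floor (q c : ℕ) (hc : c < 2 ^ q) :
    volume {x : ℝ | x ∈ Set.Ico (0:ℝ) 1 ∧ nfl q x = c} = ENNReal.ofReal ((1:ℝ) / 2 ^ q) := by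
  have h2q : (0:ℝ) < 2 ^ q := by positivity
  have hset : {x : ℝ | x ∈ Set.Ico (0:ℝ) 1 ∧ nfl q x = c}
      = Set.Ico ((c:ℝ) / 2 ^ q) (((c:ℝ) + 1) / 2 ^ q) := by
    ext x
    simp only [Set.mem_setOf_eq, Set.mem_Ico]
    constructor
    · rintro ⟨⟨hx0, _⟩, hfl⟩
      have := (Nat.floor_eq_iff (by positivity : (0:ℝ) ≤ x * 2 ^ q)).1 hfl
      constructor
      · rw [div_le_iff₀ h2q]; linarith [this.1]
      · rw [lt_div_iff₀ h2q]; linarith [this.2]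
    · rintro ⟨hl, hr⟩
      have hx0 : 0 ≤ x := le_trans (by positivity) hl
      have hcr : ((c:ℝ) + 1) ≤ 2 ^ q := by
        have : ((c:ℕ):ℝ) + 1 ≤ ((2^q : ℕ):ℝ) := by exact_mod_cast hc
        simpa using this
      have hx1 : x < 1 := lt_of_lt_of_le hr (by rw [div_le_one h2q]; exact hcr)
      refine ⟨⟨hx0, hx1⟩, ?_⟩
      show ⌊x * 2 ^ q⌋₊ = c
      rw [Nat.floor_eq_iff (by positivity)]
      constructor
      · calc (c:ℝ) = (c / 2^q) * 2^q := by field_simp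
        _ ≤ x * 2 ^ q := by exact mul_le_mul_of_nonneg_right hl (le_of_lt h2q)
      · calc x * 2 ^ q < (((c:ℝ)+1)/2^q) * 2^q := by exact mul_lt_mul_of_pos_right hr h2q
        _ = (c:ℝ) + 1 := by field_simp
  rw [hset, Real.volume_Ico]
  congr 1
  field_simp
  ring


/-! ### Parsing binary expansions into geometric blocks -/

/-- number of 0 digits of `x` starting at position `c` before the first 1 -/
def gg (x : ℝ) (c : ℕ) : ℕ := sInf {j | bit x (c + j) = 1}

/-- start position of the `n`-th block -/
def tpos (x : ℝ) : ℕ → ℕ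
  | 0 => 0
  | n + 1 => tpos x n + gg x (tpos x n) + 1

/-- the `n`-th geometric variable -/
def rr (x : ℝ) (n : ℕ) : ℕ := gg x (tpos x n)

/-- reals whose binary expansion has infinitely many 1s -/
def Good : Set ℝ := {x | ∀ c, ∃ j, bit x (c + j) = 1}

lemma gg_eq_iff' (x : ℝ) (c j : ℕ) :
    gg x c = j ↔ ((bit x (c + j) = 1 ∧ ∀ l < j, bit x (c + l) ≠ 1)
      ∨ (j = 0 ∧ ∀ l, bit x (c + l) ≠ 1)) := by
  by_cases hS : {j | bit x (c + j) = 1}.Nonempty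
  · have hmem := Nat.sInf_mem hS
    constructor
    · intro h
      left
      refine ⟨by rw [← h]; exact hmem, fun l hl => ?_⟩
      rw [← h] at hl
      unfold gg at hl
      have : l ∉ {j : ℕ | bit x (c + j) = 1} := Nat.notMem_of_lt_sInf hl
      exact this
    · rintro (⟨h1, h2⟩ | ⟨h1, h2⟩)
      · refine le_antisymm (Nat.sInf_le h1) ?_
        by_contra hlt
        exact h2 _ (Nat.lt_of_not_le hlt) hmem
      · exact absurd hmem (h2 _)
  · rw [Set.not_nonempty_iff_eq_empty] at hS
    constructor
    · intro h
      right
      refine ⟨?_, fun l hl => ?_⟩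
      · rw [← h]; unfold gg; rw [hS]; exact Nat.sInf_empty
      · have : l ∈ {j | bit x (c + j) = 1} := hl
        rw [hS] at this; exact this
    · rintro (⟨h1, _⟩ | ⟨h1, _⟩)
      · exfalso; have : j ∈ {j | bit x (c + j) = 1} := h1
        rw [hS] at this; exact this
      · rw [h1]; unfold gg; rw [hS]; exact Nat.sInf_empty

lemma gg_eq_iff {x : ℝ} (hx : x ∈ Good) (c j : ℕ) :
    gg x c = j ↔ (bit x (c + j) = 1 ∧ ∀ l < j, bit x (c + l) = 0) := by
  rw [gg_eq_iff']
  constructor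
  · rintro (⟨h1, h2⟩ | ⟨h1, h2⟩)
    · exact ⟨h1, fun l hl => by have := h2 l hl; have := bit_le_one x (c + l); omega⟩
    · exact absurd (hx c) (by push_neg; intro l; exact h2 l)
  · rintro ⟨h1, h2⟩
    left
    exact ⟨h1, fun l hl => by rw [h2 l hl]; norm_num⟩

/-! ### Measurability -/

lemma meas_bit (p : ℕ) : Measurable fun x : ℝ => bit x p := by
  have h1 : Measurable fun x : ℝ => x * 2 ^ (p + 1) := measurable_id.mul_const _
  exact (measurable_from_top (f := fun n : ℕ => n % 2)).comp
    (Nat.measurable_floor.comp h1)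

lemma meas_set_bit (p v : ℕ) : MeasurableSet {x : ℝ | bit x p = v} :=
  meas_bit p (measurableSet_singleton v)

lemma meas_set_gg (c j : ℕ) : MeasurableSet {x : ℝ | gg x c = j} := by
  have : {x : ℝ | gg x c = j} =
      (({x | bit x (c + j) = 1} ∩ ⋂ (l : ℕ) (_ : l < j), {x | bit x (c + l) = 1}ᶜ)
       ∪ (⋂ (l : ℕ), {x | bit x (c + l) = 1}ᶜ) ∩ {x : ℝ | j = 0}) := by
    ext x
    simp only [Set.mem_setOf_eq, Set.mem_union, Set.mem_inter_iff, Set.mem_iInter,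
      Set.mem_compl_iff, gg_eq_iff']
    tauto
  rw [this]
  apply MeasurableSet.union
  · exact (meas_set_bit _ 1).inter (MeasurableSet.iInter fun l =>
      MeasurableSet.iInter fun _ => (meas_set_bit _ 1).compl)
  · refine MeasurableSet.inter (MeasurableSet.iInter fun l => (meas_set_bit _ 1).compl) ?_
    by_cases h : j = 0 <;> simp [h]

lemma meas_gg (c : ℕ) : Measurable fun x : ℝ => gg x c :=
  measurable_to_countable' fun j => meas_set_gg c j

lemma meas_set_tpos (n c : ℕ) : MeasurableSet {x : ℝ | tpos x n = c} := by
  induction n generalizing c with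
  | zero =>
      have hset : {x : ℝ | tpos x 0 = c} = {x : ℝ | 0 = c} := rfl
      rw [hset]
      by_cases h : 0 = c
      · simp [h]
      · simp [h]
  | succ n IH =>
      have : {x : ℝ | tpos x (n+1) = c} =
          ⋃ (c' : ℕ), {x | tpos x n = c'} ∩ ⋃ (j : ℕ) (_ : c' + j + 1 = c), {x | gg x c' = j} := by
        ext x
        simp only [Set.mem_iUnion, Set.mem_inter_iff, Set.mem_setOf_eq, tpos]
        constructor
        · intro h
          exact ⟨tpos x n, rfl, gg x (tpos x n), h, rfl⟩
        · rintro ⟨c', h1, j, h2, h3⟩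
          rw [h1, h3]; exact h2
      rw [this]
      exact MeasurableSet.iUnion fun c' => (IH c').inter
        (MeasurableSet.iUnion fun j => MeasurableSet.iUnion fun _ => meas_set_gg c' j)

lemma meas_rr (n : ℕ) : Measurable fun x : ℝ => rr x n := by
  apply measurable_to_countable'
  intro j
  have : (fun x : ℝ => rr x n) ⁻¹' {j} = ⋃ (c : ℕ), {x | tpos x n = c} ∩ {x | gg x c = j} := by
    ext x
    simp only [Set.mem_preimage, Set.mem_singleton_iff, Set.mem_iUnion, Set.mem_inter_iff,
      Set.mem_setOf_eq, rr]
    constructor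
    · intro h; exact ⟨tpos x n, rfl, h⟩
    · rintro ⟨c, h1, h2⟩; rw [h1]; exact h2
  rw [this]
  exact MeasurableSet.iUnion fun c => (meas_set_tpos n c).inter (meas_set_gg c j)

lemma meas_Good : MeasurableSet Good := by
  have : Good = ⋂ (c : ℕ), ⋃ (j : ℕ), {x : ℝ | bit x (c + j) = 1} := by
    ext x; simp [Good]
  rw [this]
  exact MeasurableSet.iInter fun c => MeasurableSet.iUnion fun j => meas_set_bit _ 1

/-! ### The bad set is null -/

lemma vol_bad : volume (Set.Ico (0:ℝ) 1 \ Good) = 0 := by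
  have hsub : Set.Ico (0:ℝ) 1 \ Good ⊆ ⋃ (c : ℕ) (k : ℕ), {((k:ℝ) / 2 ^ c)} := by
    rintro x ⟨⟨hx0, hx1⟩, hbad⟩
    simp only [Good, Set.mem_setOf_eq, not_forall] at hbad
    obtain ⟨c, hc⟩ := hbad
    push_neg at hc
    -- y : the fractional part of x * 2^c
    set y : ℝ := x * 2 ^ c - (nfl c x : ℝ) with hy
    have hy0 : 0 ≤ y := by
      have := Nat.floor_le (by positivity : (0:ℝ) ≤ x * 2 ^ c)
      simp only [hy, nfl]; linarith
    have hy1 : y < 1 := by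
      have := Nat.lt_floor_add_one (x * 2 ^ c)
      simp only [hy, nfl]; linarith
    -- digits of y are digits of x shifted by c
    have hdig : ∀ l, bit y l = bit x (c + l) := by
      intro l
      have hmul : y * 2 ^ (l+1) = x * 2 ^ (c + l + 1) - ((nfl c x * 2 ^ (l+1) : ℕ) : ℝ) := by
        push_cast
        rw [hy, show c + l + 1 = c + (l+1) from rfl, pow_add]
        ring
      have hle : (nfl c x * 2 ^ (l+1) : ℕ) ≤ nfl (c + l + 1) x := by
        rw [nfl, nfl]
        have h1 : ((nfl c x * 2 ^ (l+1) : ℕ) : ℝ) ≤ x * 2 ^ (c + l + 1) := by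
          push_cast
          have : (nfl c x : ℝ) ≤ x * 2 ^ c := Nat.floor_le (by positivity)
          calc (nfl c x : ℝ) * 2 ^ (l+1) ≤ (x * 2 ^ c) * 2 ^ (l+1) := by
                exact mul_le_mul_of_nonneg_right this (by positivity)
          _ = x * 2 ^ (c + l + 1) := by rw [pow_add]; ring
        exact Nat.le_floor h1
      have hfl : nfl (l+1) y = nfl (c + l + 1) x - nfl c x * 2 ^ (l+1) := by
        rw [nfl, hmul, Nat.floor_sub_natCast]
        rfl
      unfold bit
      rw [hfl]
      have h2 : nfl c x * 2 ^ (l + 1) = (nfl c x * 2 ^ l) * 2 := by ring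
      set A := nfl (c + l + 1) x
      set D := nfl c x * 2 ^ l
      rw [h2] at hle ⊢
      omega
    -- all digits of y vanish, hence y = 0
    have hz : ∀ q, nfl q y = 0 := by
      intro q
      induction q with
      | zero => exact nfl_zero y hy0 hy1
      | succ q IH =>
          rw [nfl_succ, IH, hdig]
          have := hc q
          have hb := bit_le_one x (c + q)
          omega
    have hy_eq : y = 0 := by
      by_contra hne
      have hypos : 0 < y := lt_of_le_of_ne hy0 (Ne.symm hne)
      obtain ⟨q, hq⟩ := pow_unbounded_of_one_lt (1 / y) (by norm_num : (1:ℝ) < 2)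
      have : nfl q y = 0 := hz q
      rw [nfl, Nat.floor_eq_zero] at this
      rw [div_lt_iff₀ hypos] at hq
      nlinarith
    have : x = ((nfl c x : ℕ) : ℝ) / 2 ^ c := by
      have h2c : (0:ℝ) < 2 ^ c := by positivity
      field_simp
      linarith [hy_eq, hy]
    simp only [Set.mem_iUnion, Set.mem_singleton_iff]
    exact ⟨c, nfl c x, this⟩
  refine measure_mono_null hsub ?_
  refine measure_iUnion_null fun c => measure_iUnion_null fun k => Real.volume_singleton


lemma meaN {α : Type*} [MeasurableSpace α] [MeasurableSingletonClass α] [Countable α]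
    (S : Set α) : MeasurableSet S := S.to_countable.measurableSet

/-! ### The geometric measure on ℕ -/

def rho : Measure ℕ := Measure.sum fun j => ((2 : ℝ≥0∞)⁻¹) ^ (j + 1) • Measure.dirac j

lemma rho_apply (S : Set ℕ) :
    rho S = ∑' j : ℕ, if j ∈ S then ((2 : ℝ≥0∞)⁻¹) ^ (j + 1) else 0 := by
  rw [rho, Measure.sum_apply _ (meaN S)]
  congr 1
  ext j
  rw [Measure.smul_apply, Measure.dirac_apply' _ (meaN S)]
  by_cases h : j ∈ S <;> simp [h, Set.indicator]

lemma rho_singleton (v : ℕ) : rho {v} = ((2 : ℝ≥0∞)⁻¹) ^ (v + 1) := by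
  rw [rho_apply, tsum_eq_single v (fun j hj => by simp [hj])]
  simp

lemma rho_univ : rho Set.univ = 1 := by
  rw [rho_apply]
  simp only [Set.mem_univ, if_true]
  rw [ENNReal.tsum_geometric_add_one, ENNReal.one_sub_inv_two, inv_inv,
    ENNReal.inv_mul_cancel (by norm_num) (by norm_num)]

instance rho_prob : IsProbabilityMeasure rho := ⟨rho_univ⟩

/-! ### Block words -/

def Tj (j : ℕ → ℕ) (m : ℕ) : ℕ := ∑ i ∈ Finset.range m, (j i + 1)

lemma Tj_succ (j : ℕ → ℕ) (m : ℕ) : Tj j (m + 1) = Tj j m + (j m + 1) :=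
  Finset.sum_range_succ _ _

lemma Tj_mono (j : ℕ → ℕ) : StrictMono (Tj j) :=
  strictMono_nat_of_lt_succ fun m => by rw [Tj_succ]; omega

def Wd (j : ℕ → ℕ) (m : ℕ) (p : ℕ) : ℕ := if ∃ i, i < m ∧ p = Tj j i + j i then 1 else 0

lemma Wd_le_one (j : ℕ → ℕ) (m p : ℕ) : Wd j m p ≤ 1 := by
  unfold Wd; split <;> omega

lemma tpos_eq {x : ℝ} (j : ℕ → ℕ) :
    ∀ m, (∀ i < m, rr x i = j i) → tpos x m = Tj j m := by
  intro m
  induction m with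
  | zero => intro _; rfl
  | succ m IH =>
      intro h
      have h1 : tpos x m = Tj j m := IH fun i hi => h i (by omega)
      show tpos x m + gg x (tpos x m) + 1 = Tj j (m + 1)
      have h2 : gg x (tpos x m) = rr x m := rfl
      rw [Tj_succ, h2, h m (by omega), h1]
      omega

lemma crc {x : ℝ} (hx : x ∈ Good) (j : ℕ → ℕ) :
    ∀ m, ((∀ i < m, rr x i = j i) ↔ (∀ p < Tj j m, bit x p = Wd j m p)) := by
  intro m
  induction m with
  | zero => simp [Tj]
  | succ m IH =>
      have hW_agree : ∀ p < Tj j m, Wd j (m+1) p = Wd j m p := by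
        intro p hp
        unfold Wd
        congr 1
        apply propext
        constructor
        · rintro ⟨i, hi, rfl⟩
          rcases Nat.lt_or_ge i m with h' | h'
          · exact ⟨i, h', rfl⟩
          · exfalso
            have : i = m := by omega
            subst this
            omega
        · rintro ⟨i, hi, rfl⟩; exact ⟨i, by omega, rfl⟩
      have hTi : ∀ i < m, Tj j i + j i < Tj j m := by
        intro i hi
        have h1 : Tj j (i+1) = Tj j i + j i + 1 := by rw [Tj_succ]; ring
        have h2 : Tj j (i+1) ≤ Tj j m := (Tj_mono j).monotone hi
        omega
      have hblock0 : ∀ l, l < j m → Wd j (m+1) (Tj j m + l) = 0 := by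
        intro l hl
        unfold Wd
        rw [if_neg]
        rintro ⟨i, hi, heq⟩
        rcases Nat.lt_or_ge i m with h' | h'
        · have := hTi i h'; omega
        · have : i = m := by omega
          subst this; omega
      have hblock1 : Wd j (m+1) (Tj j m + j m) = 1 := by
        unfold Wd
        rw [if_pos ⟨m, by omega, rfl⟩]
      have hTsucc := Tj_succ j m
      constructor
      · intro h
        have h1 : ∀ i < m, rr x i = j i := fun i hi => h i (by omega)
        have hrm : rr x m = j m := h m (by omega)
        have htp : tpos x m = Tj j m := tpos_eq j m h1
        have hg : gg x (Tj j m) = j m := by rw [← htp]; exact hrm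
        obtain ⟨hb1, hb0⟩ := (gg_eq_iff hx _ _).1 hg
        intro p hp
        rcases Nat.lt_or_ge p (Tj j m) with h' | h'
        · rw [hW_agree p h']; exact (IH.1 h1) p h'
        · set l := p - Tj j m with hl
          have hpl : p = Tj j m + l := by omega
          have hlle : l ≤ j m := by omega
          rcases Nat.lt_or_ge l (j m) with h'' | h''
          · rw [hpl, hblock0 l h'', hb0 l h'']
          · have : l = j m := by omega
            rw [hpl, this, hblock1, hb1]
      · intro h
        have hm : ∀ p < Tj j m, bit x p = Wd j m p := by
          intro p hp
          rw [← hW_agree p hp]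
          exact h p (by omega)
        have h1 : ∀ i < m, rr x i = j i := IH.2 hm
        intro i hi
        rcases Nat.lt_or_ge i m with h' | h'
        · exact h1 i h'
        · have him : i = m := by omega
          subst him
          have htp : tpos x i = Tj j i := tpos_eq j i h1
          show gg x (tpos x i) = j i
          rw [htp]
          rw [gg_eq_iff hx]
          constructor
          · have := h (Tj j i + j i) (by omega)
            rw [hblock1] at this
            exact this
          · intro l hl
            have := h (Tj j i + l) (by omega)
            rw [hblock0 l hl] at this
            exact this

/-! ### Distribution of the first m blocks -/

lemma half_two : ENNReal.ofReal ((1:ℝ) / 2) = (2 : ℝ≥0∞)⁻¹ := by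
  rw [one_div, ENNReal.ofReal_inv_of_pos (by norm_num)]
  norm_num

lemma half_pow (q : ℕ) : ENNReal.ofReal ((1:ℝ) / 2 ^ q) = ((2 : ℝ≥0∞)⁻¹) ^ q := by
  induction q with
  | zero => simp
  | succ q IH =>
      have hr : ((2:ℝ≥0∞)⁻¹) ^ (q+1) = ((2:ℝ≥0∞)⁻¹) ^ q * 2⁻¹ := pow_succ _ _
      rw [hr, ← IH, ← half_two, ← ENNReal.ofReal_mul (by positivity)]
      congr 1
      rw [pow_succ]
      ring

lemma dist_m (m : ℕ) :
    (volume.restrict (Set.Ico (0:ℝ) 1)).map (fun x (i : Fin m) => rr x i)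
      = Measure.pi (fun _ : Fin m => rho) := by
  apply Measure.ext_of_singleton
  intro y
  have hRm : Measurable fun x : ℝ => (fun i : Fin m => rr x i) :=
    measurable_pi_lambda _ fun i => meas_rr i
  rw [Measure.map_apply hRm (measurableSet_singleton y)]
  set j : ℕ → ℕ := fun n => if h : n < m then y ⟨n, h⟩ else 0 with hj
  have hpre : (fun x : ℝ => (fun i : Fin m => rr x i)) ⁻¹' {y}
      = {x : ℝ | ∀ i < m, rr x i = j i} := by
    ext x
    constructor
    · intro hxy
      have hfun : (fun i : Fin m => rr x i) = y := hxy
      intro n hn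
      show rr x n = j n
      simp only [hj, dif_pos hn]
      exact congrFun hfun (⟨n, hn⟩ : Fin m)
    · intro hx
      show (fun i : Fin m => rr x i) = y
      funext i
      have := hx i i.isLt
      simpa only [hj, dif_pos i.isLt] using this
  rw [hpre]
  set q := Tj j m with hq
  set w := Wd j m with hw
  have hcv : cval w q < 2 ^ q := cval_lt w (Wd_le_one j m) q
  -- replace by Good ∩ floor set
  have hA : volume.restrict (Set.Ico (0:ℝ) 1) {x : ℝ | ∀ i < m, rr x i = j i}
      = volume ({x : ℝ | x ∈ Set.Ico (0:ℝ) 1 ∧ nfl q x = cval w q}) := by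
    rw [Measure.restrict_apply']
    · have hgood : ∀ (S : Set ℝ), volume (S ∩ Set.Ico (0:ℝ) 1)
          = volume (S ∩ Set.Ico (0:ℝ) 1 ∩ Good) := by
        intro S
        have hd : volume ((S ∩ Set.Ico (0:ℝ) 1) \ Good) = 0 :=
          measure_mono_null (t := Set.Ico (0:ℝ) 1 \ Good) (fun x hx => ⟨hx.1.2, hx.2⟩) vol_bad
        have := measure_inter_add_diff (μ := volume) (S ∩ Set.Ico (0:ℝ) 1) meas_Good
        rw [hd, add_zero] at this
        exact this.symm
      have hST : {x : ℝ | x ∈ Set.Ico (0:ℝ) 1 ∧ nfl q x = cval w q}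
          = {x : ℝ | nfl q x = cval w q} ∩ Set.Ico (0:ℝ) 1 := by
        ext x; simp only [Set.mem_inter_iff, Set.mem_setOf_eq]; tauto
      rw [hST, hgood, hgood]
      congr 1
      ext x
      simp only [Set.mem_inter_iff, Set.mem_setOf_eq, Set.mem_Ico]
      constructor
      · rintro ⟨⟨h1, ⟨h2a, h2b⟩⟩, h3⟩
        refine ⟨⟨?_, ⟨h2a, h2b⟩⟩, h3⟩
        have hword := (crc h3 j m).1 h1
        exact (word_iff x h2a h2b w (Wd_le_one j m) q).1 hword
      · rintro ⟨⟨h1, ⟨h2a, h2b⟩⟩, h3⟩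
        refine ⟨⟨?_, ⟨h2a, h2b⟩⟩, h3⟩
        apply (crc h3 j m).2
        exact (word_iff x h2a h2b w (Wd_le_one j m) q).2 h1
    · exact measurableSet_Ico
  rw [hA, vol_floor q _ hcv, half_pow]
  -- RHS
  rw [← Set.univ_pi_singleton y, Measure.pi_pi]
  have : ∀ i : Fin m, rho {y i} = ((2:ℝ≥0∞)⁻¹) ^ (y i + 1) := fun i => rho_singleton (y i)
  rw [Finset.prod_congr rfl fun i _ => this i]
  rw [Finset.prod_pow_eq_pow_sum]
  congr 1
  rw [hq, Tj, ← Fin.sum_univ_eq_sum_range (fun n => j n + 1) m]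
  apply Finset.sum_congr rfl
  intro i _
  simp only [hj, dif_pos i.isLt]


/-! ### The dominating sequence -/

variable (f : (n : ℕ) → (Fin n → ℕ) → ℕ)

def Ff (n v : ℕ) : ℕ :=
  Finset.univ.sup fun x : Fin n → Fin (v + 1) => f n fun i => (x i : ℕ)

def aa : ℕ → ℕ
  | 0 => 4
  | j + 1 => 4 * aa j + 1 + (Finset.range (aa j + 1)).sup fun m => Ff f m (aa j)

lemma aa_mono : StrictMono (aa f) := by
  apply strictMono_nat_of_lt_succ
  intro j
  show aa f j < 4 * aa f j + 1 + _
  omega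

lemma aa_ge (j : ℕ) : 4 ^ (j + 1) ≤ aa f j := by
  induction j with
  | zero => simp [aa]
  | succ j IH =>
      show 4 ^ (j+2) ≤ 4 * aa f j + 1 + _
      have : 4 ^ (j + 2) = 4 * 4 ^ (j+1) := by ring
      omega

lemma Ff_le_aa_succ (n j : ℕ) (hn : n ≤ aa f j) : Ff f n (aa f j) ≤ aa f (j + 1) := by
  show Ff f n (aa f j) ≤ 4 * aa f j + 1 + _
  have : Ff f n (aa f j) ≤ (Finset.range (aa f j + 1)).sup fun m => Ff f m (aa f j) :=
    Finset.le_sup (f := fun m => Ff f m (aa f j)) (Finset.mem_range.2 (by omega))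
  omega

lemma f_le_Ff (n v : ℕ) (k : ℕ → ℕ) (hk : ∀ i < n, k i ≤ v) :
    f n (fun i : Fin n => k i) ≤ Ff f n v := by
  have hx : ∀ i : Fin n, k i < v + 1 := fun i => Nat.lt_succ_of_le (hk i i.isLt)
  exact Finset.le_sup (f := fun x : Fin n → Fin (v + 1) => f n fun i => (x i : ℕ))
    (Finset.mem_univ (fun i : Fin n => (⟨k (i : ℕ), hx i⟩ : Fin (v + 1))))

/-! ### The deterministic combinatorial lemma -/

lemma det (k : ℕ → ℕ) (h3 : ∀ i, k i ∈ Set.range (aa f))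
    (N : ℕ) (h2 : ∀ n, N ≤ n → ∃ i, i < n ∧ n ≤ k i) :
    {n : ℕ | f n (fun i : Fin n => k i) ≤ k n}.Infinite := by
  apply Set.infinite_of_not_bddAbove
  rintro ⟨N₀, hN₀⟩
  rw [mem_upperBounds] at hN₀
  set M := max N N₀ + 1 with hM
  set B := (Finset.range M).sup k with hB
  have hub : ∀ m, ∃ i, m ≤ k i := by
    intro m
    obtain ⟨i, _, hik⟩ := h2 (max N m) (le_max_left _ _)
    exact ⟨i, le_trans (le_max_right _ _) hik⟩
  obtain ⟨i₀, hi₀⟩ := hub (B + 1)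
  have hex : ∃ n, B < k n := ⟨i₀, by omega⟩
  set n := Nat.find hex with hns
  have hn : B < k n := Nat.find_spec hex
  have hmin : ∀ l, l < n → ¬ B < k l := fun l hl => Nat.find_min hex hl
  have hnM : M ≤ n := by
    by_contra h
    push_neg at h
    have : k n ≤ B := Finset.le_sup (Finset.mem_range.2 h)
    omega
  obtain ⟨i₁, hi₁, hi₁k⟩ := h2 n (by omega)
  set V := (Finset.range n).sup k with hVs
  have hVn : n ≤ V := le_trans hi₁k (Finset.le_sup (Finset.mem_range.2 hi₁))
  have hVB : V ≤ B := Finset.sup_le fun i hi => by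
    have := hmin i (Finset.mem_range.1 hi); omega
  obtain ⟨i₂, _, hV⟩ := Finset.exists_mem_eq_sup (Finset.range n)
    ⟨i₁, Finset.mem_range.2 hi₁⟩ k
  obtain ⟨J, hJ⟩ := h3 i₂
  obtain ⟨R, hR⟩ := h3 n
  have hJV : aa f J = V := by rw [hVs, hV, hJ]
  have hJR : J < R := by
    have : aa f J < aa f R := by rw [hJV, hR]; omega
    exact (aa_mono f).lt_iff_lt.1 this
  have hstep : aa f (J + 1) ≤ k n := by
    rw [← hR]
    exact (aa_mono f).monotone (by omega)
  have hnaJ : n ≤ aa f J := by omega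
  have hchain : f n (fun i : Fin n => k i) ≤ k n := by
    have h1 : f n (fun i : Fin n => k i) ≤ Ff f n (aa f J) := by
      apply f_le_Ff
      intro i hi
      have : k i ≤ V := Finset.le_sup (Finset.mem_range.2 hi)
      omega
    have h2' : Ff f n (aa f J) ≤ aa f (J + 1) := Ff_le_aa_succ f n J hnaJ
    omega
  have := hN₀ n hchain
  omega

/-! ### Assembling the theorem -/

theorem exists_sudden_measure' (f : (n : ℕ) → (Fin n → ℕ) → ℕ) :
    ∃ (σ : Measure ℕ) (P : Measure (ℕ → ℕ)),
      IsProbabilityMeasure σ ∧ IsProbabilityMeasure P ∧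
      (∀ (s : Finset ℕ) (B : ℕ → Set ℕ),
        P {k : ℕ → ℕ | ∀ i ∈ s, k i ∈ B i} = ∏ i ∈ s, σ (B i)) ∧
      ∀ᵐ k ∂P, {n : ℕ | f n (fun i : Fin n => k i) ≤ k n}.Infinite := by
  set μ := volume.restrict (Set.Ico (0:ℝ) 1) with hμs
  have hμ : IsProbabilityMeasure μ := ⟨by
    rw [hμs, Measure.restrict_apply MeasurableSet.univ, Set.univ_inter, Real.volume_Ico]
    norm_num⟩
  have haa_meas : Measurable (aa f) := measurable_from_top
  set K : ℝ → (ℕ → ℕ) := fun x n => aa f (rr x n) with hKs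
  have hK : Measurable K :=
    measurable_pi_lambda _ fun n => haa_meas.comp (meas_rr n)
  set σ : Measure ℕ := rho.map (aa f) with hσs
  set P : Measure (ℕ → ℕ) := μ.map K with hPs
  have hσB : ∀ S : Set ℕ, σ S = rho ((aa f) ⁻¹' S) := fun S =>
    Measure.map_apply haa_meas (meaN S)
  have hσprob : IsProbabilityMeasure σ := Measure.isProbabilityMeasure_map haa_meas.aemeasurable
  have hPprob : IsProbabilityMeasure P := Measure.isProbabilityMeasure_map hK.aemeasurable
  -- the cylinder property
  have key : ∀ (s : Finset ℕ) (B : ℕ → Set ℕ),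
      P {k : ℕ → ℕ | ∀ i ∈ s, k i ∈ B i} = ∏ i ∈ s, σ (B i) := by
    intro s B
    set m := s.sup id + 1 with hm
    have hsm : ∀ i ∈ s, i < m := fun i hi =>
      lt_of_le_of_lt (Finset.le_sup (f := id) hi) (Nat.lt_succ_self _)
    set D : Set (Fin m → ℕ) :=
      Set.pi Set.univ (fun i => if (i : ℕ) ∈ s then (aa f) ⁻¹' (B i) else Set.univ) with hD
    have hcylm : MeasurableSet {k : ℕ → ℕ | ∀ i ∈ s, k i ∈ B i} := by
      have : {k : ℕ → ℕ | ∀ i ∈ s, k i ∈ B i} = Set.pi (↑s) B := by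
        ext k; simp [Set.mem_pi]
      rw [this]
      exact MeasurableSet.pi s.countable_toSet fun i _ => meaN (B i)
    rw [hPs, Measure.map_apply hK hcylm]
    have hpre : K ⁻¹' {k | ∀ i ∈ s, k i ∈ B i} = (fun x (i : Fin m) => rr x i) ⁻¹' D := by
      ext x
      simp only [Set.mem_preimage, Set.mem_setOf_eq, hD, Set.mem_pi, Set.mem_univ,
        forall_true_left]
      constructor
      · intro h i
        by_cases hi : (i : ℕ) ∈ s
        · rw [if_pos hi]; exact h i hi
        · rw [if_neg hi]; trivial
      · intro h i hi
        have := h ⟨i, hsm i hi⟩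
        rw [if_pos hi] at this
        exact this
    have hDmeas : MeasurableSet D := meaN D
    have hRm : Measurable (fun x : ℝ => (fun i : Fin m => rr x i)) :=
      measurable_pi_lambda _ fun i => meas_rr i
    rw [hpre, ← Measure.map_apply (f := fun x : ℝ => (fun i : Fin m => rr x i)) hRm hDmeas,
      dist_m m, hD, Measure.pi_pi]
    have hterm : ∀ i : Fin m, rho (if (i : ℕ) ∈ s then (aa f) ⁻¹' (B i) else Set.univ)
        = (fun l => if l ∈ s then σ (B l) else 1) (i : ℕ) := by
      intro i
      by_cases hi : (i : ℕ) ∈ s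
      · simp only [hi, if_pos, if_true]; exact (hσB _).symm
      · simp only [hi, if_neg, if_false]; exact rho_univ
    rw [Finset.prod_congr rfl fun i _ => hterm i,
      Fin.prod_univ_eq_prod_range (fun l => if l ∈ s then σ (B l) else 1) m,
      ← Finset.prod_subset (fun i hi => Finset.mem_range.2 (hsm i hi))
        (fun i _ hin => if_neg hin)]
    exact Finset.prod_congr rfl fun i hi => if_pos hi
  refine ⟨σ, P, hσprob, hPprob, key, ?_⟩
  -- a.e. all values are in the range of aa
  have hA1 : ∀ᵐ k ∂P, ∀ i, k i ∈ Set.range (aa f) := by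
    rw [ae_all_iff]
    intro i
    rw [ae_iff]
    have hset : {k : ℕ → ℕ | ¬ k i ∈ Set.range (aa f)}
        = {k : ℕ → ℕ | ∀ l ∈ ({i} : Finset ℕ), k l ∈ (Set.range (aa f))ᶜ} := by
      ext k; simp
    rw [hset, key {i} (fun _ => (Set.range (aa f))ᶜ), Finset.prod_singleton, hσB]
    have : (aa f) ⁻¹' (Set.range (aa f))ᶜ = ∅ := by
      ext j; simp [Set.mem_range]
    rw [this]
    exact measure_empty
  -- Borel-Cantelli part
  set C : ℕ → Set (ℕ → ℕ) := fun n => {k | ∀ i ∈ Finset.range n, k i ∈ Set.Iio n} with hC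
  have hPC : ∀ n, P (C n) = (σ (Set.Iio n)) ^ n := by
    intro n
    rw [hC, key (Finset.range n) (fun _ => Set.Iio n), Finset.prod_const, Finset.card_range]
  have hσIci : ∀ n : ℕ, 1 ≤ n → ((2:ℝ≥0∞)⁻¹) ^ (Nat.log 4 n + 1) ≤ σ (Set.Ici n) := by
    intro n hn
    set L := Nat.log 4 n with hL
    have haL : n ≤ aa f L := by
      have h1 : n < 4 ^ (L + 1) := Nat.lt_pow_succ_log_self (by norm_num) n
      have h2 : 4 ^ (L + 1) ≤ aa f L := aa_ge f L
      omega
    calc ((2:ℝ≥0∞)⁻¹) ^ (L + 1) = rho {L} := (rho_singleton L).symm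
    _ ≤ rho ((aa f) ⁻¹' (Set.Ici n)) := by
        apply measure_mono
        intro j hj
        simp only [Set.mem_singleton_iff] at hj
        subst hj
        simp only [Set.mem_preimage, Set.mem_Ici]
        exact haL
    _ = σ (Set.Ici n) := (hσB _).symm
  have hσIio : ∀ n : ℕ, 1 ≤ n →
      σ (Set.Iio (n:ℕ)) ≤ 1 - ((2:ℝ≥0∞)⁻¹) ^ (Nat.log 4 n + 1) := by
    intro n hn
    have hd : σ (Set.Iio n) + σ (Set.Ici n) = 1 := by
      rw [← measure_union (Set.Iio_disjoint_Ici le_rfl) (meaN _), Set.Iio_union_Ici]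
      exact hσprob.measure_univ
    have hb := hσIci n hn
    have hble : ((2:ℝ≥0∞)⁻¹) ^ (Nat.log 4 n + 1) ≤ 1 := by
      apply pow_le_one₀ <;> simp [ENNReal.inv_le_one]
    apply ENNReal.le_sub_of_add_le_right (by simp)
    calc σ (Set.Iio n) + ((2:ℝ≥0∞)⁻¹) ^ (Nat.log 4 n + 1)
        ≤ σ (Set.Iio n) + σ (Set.Ici n) := by exact add_le_add le_rfl hb
    _ = 1 := hd
  -- real-analytic bound
  have hreal : ∀ n : ℕ, 1 ≤ n →
      P (C n) ≤ ENNReal.ofReal (4096 / (n:ℝ) ^ 2) := by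
    intro n hn
    set L := Nat.log 4 n with hL
    set q : ℝ := (1/2 : ℝ) ^ (L + 1) with hq
    have hq0 : 0 < q := by positivity
    have hq1 : q ≤ 1 := by
      rw [hq]
      apply pow_le_one₀ <;> norm_num
    have hconv : (1 : ℝ≥0∞) - ((2:ℝ≥0∞)⁻¹) ^ (L + 1) = ENNReal.ofReal (1 - q) := by
      have h1 : ((2:ℝ≥0∞)⁻¹) ^ (L + 1) = ENNReal.ofReal q := by
        rw [hq, ← half_pow (L + 1)]
        congr 1
        rw [div_pow]
        norm_num
      rw [h1, ← ENNReal.ofReal_one, ← ENNReal.ofReal_sub _ (le_of_lt hq0)]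
    have hP1 : P (C n) ≤ ENNReal.ofReal ((1 - q) ^ n) := by
      rw [hPC n, ENNReal.ofReal_pow (by linarith)]
      exact pow_le_pow_left' (le_trans (hσIio n hn) (le_of_eq hconv)) n
    refine le_trans hP1 (ENNReal.ofReal_le_ofReal ?_)
    -- (1-q)^n ≤ 4096 / n^2
    set s : ℝ := Real.sqrt n with hs
    have hs0 : 0 < s := Real.sqrt_pos.2 (by exact_mod_cast hn)
    have hs2 : s ^ 2 = n := Real.sq_sqrt (by positivity)
    have h4L : (4:ℝ) ^ L ≤ n := by
      have := Nat.pow_log_le_self 4 (by omega : n ≠ 0)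
      exact_mod_cast this
    have h2L : (2:ℝ) ^ L ≤ s := by
      rw [show s = Real.sqrt n from rfl]
      rw [Real.le_sqrt (by positivity) (by positivity)]
      calc ((2:ℝ) ^ L) ^ 2 = 4 ^ L := by
            rw [← pow_mul, mul_comm, pow_mul]; norm_num
      _ ≤ n := h4L
    have hqs : 1 / (2 * s) ≤ q := by
      have hq' : q = 1 / (2 * 2 ^ L) := by
        rw [hq, pow_succ, div_pow, one_pow]
        ring
      rw [hq']
      exact one_div_le_one_div_of_le (by positivity) (by nlinarith)
    have hβ0 : (0:ℝ) ≤ 1 - q := by linarith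
    have hβn : (1 - q) ^ n ≤ Real.exp ((n:ℝ) * -q) := by
      calc (1 - q) ^ n ≤ Real.exp (-q) ^ n := by
            apply pow_le_pow_left₀ hβ0
            linarith [Real.add_one_le_exp (-q)]
      _ = Real.exp ((n:ℝ) * -q) := (Real.exp_nat_mul _ n).symm
    have hqn : s / 2 ≤ (n:ℝ) * q := by
      have h1 : (n:ℝ) * (1 / (2 * s)) = s / 2 := by
        rw [← hs2]; field_simp
      nlinarith [mul_le_mul_of_nonneg_left hqs (by positivity : (0:ℝ) ≤ (n:ℝ))]
    have hmono : Real.exp ((n:ℝ) * -q) ≤ Real.exp (-(s/2)) := by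
      apply Real.exp_le_exp.2
      nlinarith
    have hfinal : Real.exp (-(s/2)) ≤ 4096 / (n:ℝ) ^ 2 := by
      have he : s/8 + 1 ≤ Real.exp (s/8) := Real.add_one_le_exp _
      have h4a : (s/8) ^ 4 ≤ (s/8 + 1) ^ 4 := pow_le_pow_left₀ (by positivity) (by linarith) 4
      have h4b : (s/8 + 1) ^ 4 ≤ Real.exp (s/8) ^ 4 := pow_le_pow_left₀ (by positivity) he 4
      have hexp4 : Real.exp (s/8) ^ 4 = Real.exp (s/2) := by
        rw [← Real.exp_nat_mul]
        congr 1
        push_cast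
        ring
      have hs4 : (s/8) ^ 4 = (n:ℝ) ^ 2 / 4096 := by
        rw [div_pow, show ((8:ℝ)) ^ 4 = 4096 by norm_num,
          show s ^ 4 = (s ^ 2) ^ 2 by ring, hs2]
      have key2 : (n:ℝ) ^ 2 ≤ 4096 * Real.exp (s/2) := by nlinarith
      have hn2 : (0:ℝ) < (n:ℝ) ^ 2 := by
        have : (1:ℝ) ≤ (n:ℝ) := by exact_mod_cast hn
        positivity
      rw [le_div_iff₀ hn2, Real.exp_neg]
      calc (Real.exp (s/2))⁻¹ * (n:ℝ) ^ 2
          ≤ (Real.exp (s/2))⁻¹ * (4096 * Real.exp (s/2)) := by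
            apply mul_le_mul_of_nonneg_left key2 (by positivity)
      _ = 4096 := by field_simp
    linarith
  -- summability
  have hsum : (∑' n, P (C n)) ≠ ⊤ := by
    have h1 : Summable (fun n : ℕ => 1 / ((n:ℝ)) ^ 2) := Real.summable_one_div_nat_pow.2 one_lt_two
    have h2 : Summable (fun n : ℕ => 1 / (((n:ℕ) + 1 : ℝ)) ^ 2) := by
      have := (summable_nat_add_iff (f := fun n : ℕ => 1 / ((n:ℝ)) ^ 2) 1).2 h1
      apply this.congr
      intro n
      push_cast
      ring
    have hsummable : Summable (fun n : ℕ => 4096 / ((n:ℝ) + 1) ^ 2) := by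
      apply (h2.mul_left 4096).congr
      intro n
      field_simp
    have hbound : ∀ n : ℕ, P (C (n+1)) ≤ ENNReal.ofReal (4096 / ((n:ℝ) + 1) ^ 2) := by
      intro n
      have := hreal (n+1) (by omega)
      convert this using 3
      push_cast
      ring
    have hle : (∑' n, P (C n)) ≤ 1 + ENNReal.ofReal (∑' n : ℕ, 4096 / ((n:ℝ) + 1) ^ 2) := by
      rw [tsum_eq_zero_add' ENNReal.summable,
        ENNReal.ofReal_tsum_of_nonneg (fun n => by positivity) hsummable]
      apply add_le_add
      · exact prob_le_one
      · exact ENNReal.tsum_le_tsum hbound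
    exact ne_top_of_le_ne_top (by simp [ENNReal.add_eq_top]) hle
  have hBC := ae_eventually_notMem (μ := P) hsum
  filter_upwards [hA1, hBC] with k h1 h2
  rw [Filter.eventually_atTop] at h2
  obtain ⟨N, hN⟩ := h2
  apply det f k h1 N
  intro n hn
  have hnot := hN n hn
  simp only [hC, Set.mem_setOf_eq, Finset.mem_range, Set.mem_Iio] at hnot
  push_neg at hnot
  obtain ⟨i, hi, hik⟩ := hnot
  exact ⟨i, hi, hik⟩


end SuddenAux

end SuddenAuxSection

/-- For any family of functions `fₙ : ℕⁿ → ℕ` there exists a Borel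
probability measure `σ` on `ℕ` such that, with respect to the infinite product measure
`σ^ℕ` on `ℕ^ℕ` (characterized here by its values on cylinder sets), almost every sequence
`(kₙ)` satisfies `kₙ ≥ fₙ(k₀, …, k_{n-1})` for infinitely many `n`. -/
theorem exists_sudden_measure (f : (n : ℕ) → (Fin n → ℕ) → ℕ) :
    ∃ (σ : Measure ℕ) (P : Measure (ℕ → ℕ)),
      IsProbabilityMeasure σ ∧ IsProbabilityMeasure P ∧
      (∀ (s : Finset ℕ) (B : ℕ → Set ℕ),
        P {k : ℕ → ℕ | ∀ i ∈ s, k i ∈ B i} = ∏ i ∈ s, σ (B i)) ∧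
      ∀ᵐ k ∂P, {n : ℕ | f n (fun i : Fin n => k i) ≤ k n}.Infinite := by
  exact SuddenAux.exists_sudden_measure' f
end

section
/- Let S be a countable set, and let (a_s)_{s∈S} and (b_s)_{s∈S} be families of strictly positive reals with Σ_{s∈S} a_s = 1 and Σ_{s∈S} b_s = 1. Let (c_s)_{s∈S} and (d_s)_{s∈S} be bounded families of reals. Suppose K ≥ 0 satisfies |ln(a_s) − ln(b_s)| ≤ K for all s ∈ S, and set ε = 2/(1 + e^K). Then Σ_{s∈S} (a_s c_s − b_s d_s) ≤ (1 − ε)·(sup_{s∈S} c_s − inf_{s∈S} d_s) + ε·sup_{s∈S} (c_s − d_s). -/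
/-- Let `S` be countable, `(aₛ)`, `(bₛ)` strictly positive probability
vectors, and `(cₛ)`, `(dₛ)` bounded real families.  If `|ln aₛ − ln bₛ| ≤ K` for all `s`
and `ε = 2/(1 + e^K)`, then
`Σₛ (aₛ cₛ − bₛ dₛ) ≤ (1 − ε)(sup c − inf d) + ε · sup (c − d)`. -/
theorem sum_sub_le_of_log_close
    {S : Type*} [Countable S] (a b c d : S → ℝ)
    (ha : ∀ s, 0 < a s) (hb : ∀ s, 0 < b s)
    (hsa : ∑' s, a s = 1) (hsb : ∑' s, b s = 1)
    (hcub : BddAbove (Set.range c)) (hclb : BddBelow (Set.range c))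
    (hdub : BddAbove (Set.range d)) (hdlb : BddBelow (Set.range d))
    (K : ℝ) (hK : 0 ≤ K)
    (hab : ∀ s, |Real.log (a s) - Real.log (b s)| ≤ K) :
    ∑' s, (a s * c s - b s * d s) ≤
      (1 - 2 / (1 + Real.exp K)) * ((⨆ s, c s) - ⨅ s, d s)
        + (2 / (1 + Real.exp K)) * ⨆ s, (c s - d s) := by
  rcases isEmpty_or_nonempty S with hS | hS
  · have hz : ∀ f : S → ℝ, ∑' s, f s = 0 := fun f => by
      rw [tsum_eq_sum (s := (∅ : Finset S)) (fun s _ => isEmptyElim s)]; simp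
    simp [hz, Real.iSup_of_isEmpty, Real.iInf_of_isEmpty]
  have hexp : (0:ℝ) < 1 + Real.exp K := by positivity
  set ε : ℝ := 2 / (1 + Real.exp K) with hε
  -- summability
  have hsa' : Summable a := by
    by_contra h; rw [tsum_eq_zero_of_not_summable h] at hsa; norm_num at hsa
  have hsb' : Summable b := by
    by_contra h; rw [tsum_eq_zero_of_not_summable h] at hsb; norm_num at hsb
  set m : S → ℝ := fun s => min (a s) (b s) with hm
  have hm0 : ∀ s, 0 ≤ m s := fun s => le_min (ha s).le (hb s).le
  have hmle : ∀ s, m s ≤ a s := fun s => min_le_left _ _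
  have hm' : Summable m := hsa'.of_nonneg_of_le hm0 hmle
  -- bounds on c, d
  obtain ⟨Cu, hCu⟩ := id hcub
  obtain ⟨Cl, hCl⟩ := hclb
  obtain ⟨Du, hDu⟩ := hdub
  obtain ⟨Dl, hDl⟩ := id hdlb
  have hc' : ∀ s, |c s| ≤ max Cu (-Cl) := by
    intro s
    rw [abs_le]
    constructor
    · have := hCl (Set.mem_range_self (f := c) s); nlinarith [le_max_right Cu (-Cl)]
    · exact le_trans (hCu (Set.mem_range_self s)) (le_max_left _ _)
  have hd' : ∀ s, |d s| ≤ max Du (-Dl) := by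
    intro s
    rw [abs_le]
    constructor
    · have := hDl (Set.mem_range_self (f := d) s); nlinarith [le_max_right Du (-Dl)]
    · exact le_trans (hDu (Set.mem_range_self s)) (le_max_left _ _)
  set Bc := max Cu (-Cl)
  set Bd := max Du (-Dl)
  have hBc : 0 ≤ Bc := le_trans (abs_nonneg _) (hc' (Classical.arbitrary S))
  have hBd : 0 ≤ Bd := le_trans (abs_nonneg _) (hd' (Classical.arbitrary S))
  -- key pointwise bound : (a+b)/(1+e^K) ≤ m
  have key : ∀ s, (a s + b s) / (1 + Real.exp K) ≤ m s := by
    intro s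
    rw [div_le_iff₀ hexp]
    have h1 := (abs_le.1 (hab s)).1
    have h2 := (abs_le.1 (hab s)).2
    have hba : b s ≤ Real.exp K * a s := by
      have : Real.log (b s) ≤ K + Real.log (a s) := by linarith
      calc b s = Real.exp (Real.log (b s)) := (Real.exp_log (hb s)).symm
        _ ≤ Real.exp (K + Real.log (a s)) := Real.exp_le_exp.2 this
        _ = Real.exp K * a s := by rw [Real.exp_add, Real.exp_log (ha s)]
    have hab' : a s ≤ Real.exp K * b s := by
      have : Real.log (a s) ≤ K + Real.log (b s) := by linarith
      calc a s = Real.exp (Real.log (a s)) := (Real.exp_log (ha s)).symm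
        _ ≤ Real.exp (K + Real.log (b s)) := Real.exp_le_exp.2 this
        _ = Real.exp K * b s := by rw [Real.exp_add, Real.exp_log (hb s)]
    rcases min_cases (a s) (b s) with ⟨heq, hle⟩ | ⟨heq, hle⟩ <;> rw [hm] <;>
      simp only [heq] <;> nlinarith
  -- M := ∑' m, with ε ≤ M ≤ 1
  set M : ℝ := ∑' s, m s with hM
  have hMle : M ≤ 1 := by
    rw [hM, ← hsa]; exact Summable.tsum_le_tsum hmle hm' hsa'
  have hMge : ε ≤ M := by
    have hsum : Summable (fun s => (a s + b s) / (1 + Real.exp K)) :=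
      (hsa'.add hsb').div_const _
    have : ∑' s, (a s + b s) / (1 + Real.exp K) = ε := by
      rw [tsum_div_const, Summable.tsum_add hsa' hsb', hsa, hsb, hε]; norm_num
    rw [← this, hM]
    exact Summable.tsum_le_tsum key hsum hm'
  -- the three pieces
  have hSf1 : Summable (fun s => m s * (c s - d s)) := by
    apply Summable.of_norm_bounded (g := fun s => a s * (Bc + Bd)) (hsa'.mul_right _)
    intro s
    rw [Real.norm_eq_abs, abs_mul, abs_of_nonneg (hm0 s)]
    have : |c s - d s| ≤ Bc + Bd := (abs_sub _ _).trans (add_le_add (hc' s) (hd' s))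
    exact mul_le_mul (hmle s) this (abs_nonneg _) (ha s).le
  have hSf2 : Summable (fun s => (a s - m s) * c s) := by
    apply Summable.of_norm_bounded (g := fun s => a s * Bc) (hsa'.mul_right _)
    intro s
    rw [Real.norm_eq_abs, abs_mul, abs_of_nonneg (sub_nonneg.2 (hmle s))]
    exact mul_le_mul (by nlinarith [hm0 s, hmle s]) (hc' s) (abs_nonneg _) (ha s).le
  have hSf3 : Summable (fun s => (b s - m s) * d s) := by
    apply Summable.of_norm_bounded (g := fun s => b s * Bd) (hsb'.mul_right _)
    intro s
    rw [Real.norm_eq_abs, abs_mul, abs_of_nonneg (sub_nonneg.2 (min_le_right _ _))]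
    exact mul_le_mul (by nlinarith [hm0 s, min_le_right (a s) (b s)]) (hd' s)
      (abs_nonneg _) (hb s).le
  -- decomposition
  have hdecomp : ∑' s, (a s * c s - b s * d s)
      = (∑' s, m s * (c s - d s)) + (∑' s, (a s - m s) * c s)
        - ∑' s, (b s - m s) * d s := by
    rw [← Summable.tsum_add hSf1 hSf2, ← Summable.tsum_sub (hSf1.add hSf2) hSf3]
    exact tsum_congr fun s => by ring
  -- sup / inf facts
  set C := ⨆ s, c s with hC
  set I := ⨅ s, d s with hI
  set D := ⨆ s, (c s - d s) with hD
  have hrangeD : BddAbove (Set.range fun s => c s - d s) := by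
    refine ⟨Cu - Dl, ?_⟩
    rintro x ⟨s, rfl⟩
    have := hCu (Set.mem_range_self (f := c) s)
    have := hDl (Set.mem_range_self (f := d) s)
    simp only []
    linarith
  have hcle : ∀ s, c s ≤ C := fun s => le_ciSup hcub s
  have hdge : ∀ s, I ≤ d s := fun s => ciInf_le hdlb s
  have hDle : ∀ s, c s - d s ≤ D := fun s => le_ciSup hrangeD s
  have hDCI : D ≤ C - I := by
    rw [hD]
    exact ciSup_le fun s => by have := hcle s; have := hdge s; linarith
  -- bound each piece
  have h1 : (∑' s, m s * (c s - d s)) ≤ M * D := by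
    rw [hM, ← tsum_mul_right]
    exact Summable.tsum_le_tsum (fun s => mul_le_mul_of_nonneg_left (hDle s) (hm0 s))
      hSf1 (hm'.mul_right _)
  have h2 : (∑' s, (a s - m s) * c s) ≤ (1 - M) * C := by
    have hsum2 : ∑' s, (a s - m s) = 1 - M := by
      rw [Summable.tsum_sub hsa' hm', hsa, hM]
    rw [← hsum2, ← tsum_mul_right]
    exact Summable.tsum_le_tsum
      (fun s => mul_le_mul_of_nonneg_left (hcle s) (sub_nonneg.2 (hmle s)))
      hSf2 ((hsa'.sub hm').mul_right _)
  have h3 : (1 - M) * I ≤ ∑' s, (b s - m s) * d s := by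
    have hsum3 : ∑' s, (b s - m s) = 1 - M := by
      rw [Summable.tsum_sub hsb' hm', hsb, hM]
    rw [← hsum3, ← tsum_mul_right]
    exact Summable.tsum_le_tsum
      (fun s => mul_le_mul_of_nonneg_left (hdge s) (sub_nonneg.2 (min_le_right _ _)))
      ((hsb'.sub hm').mul_right _) hSf3
  rw [hdecomp]
  have hfin : M * D + (1 - M) * C - (1 - M) * I ≤ (1 - ε) * (C - I) + ε * D := by
    nlinarith [mul_nonneg (sub_nonneg.2 hMge) (sub_nonneg.2 hDCI)]
  calc (∑' s, m s * (c s - d s)) + (∑' s, (a s - m s) * c s)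
        - ∑' s, (b s - m s) * d s
      ≤ M * D + (1 - M) * C - (1 - M) * I := by linarith
    _ ≤ (1 - ε) * (C - I) + ε * D := hfin
end

section
/- Let a ∈ ℂ be transcendental over ℚ. For each integer d ≥ 2 define S_d : ℂ → ℂ by S_d(z) = a·zᵈ + 1. Then for every n ≥ 1 and every finite sequence of integers d_0, …, d_{n−1} with each d_j ≥ 2, the composition T = S_{d_{n−1}} ∘ ⋯ ∘ S_{d_0} has no fixed critical point: there is no p ∈ ℂ with T(p) = p and T′(p) = 0. -/
/-- The composition `S_{d_{n-1}} ∘ ⋯ ∘ S_{d_0}`, where `S_d (z) = a·z^d + 1`. -/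
noncomputable def compSeq (a : ℂ) : (n : ℕ) → (Fin n → ℕ) → ℂ → ℂ
  | 0, _ => id
  | n + 1, d => (fun z => a * z ^ (d (Fin.last n)) + 1) ∘ compSeq a n (fun i => d i.castSucc)

/-- List version: apply the maps `S_e` for `e` in the list, left to right. -/
noncomputable def compList (a : ℂ) : List ℕ → ℂ → ℂ
  | [], z => z
  | e :: l, z => compList a l (a * z ^ e + 1)

lemma compList_append (a : ℂ) (l1 l2 : List ℕ) (z : ℂ) :
    compList a (l1 ++ l2) z = compList a l2 (compList a l1 z) := by
  induction l1 generalizing z with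
  | nil => rfl
  | cons e l ih => simp [compList, ih]

lemma compSeq_eq (a : ℂ) (n : ℕ) (d : Fin n → ℕ) :
    compSeq a n d = compList a (List.ofFn d) := by
  induction n with
  | zero => rfl
  | succ n ih =>
    funext z
    rw [List.ofFn_succ', List.concat_eq_append, compList_append]
    simp [compSeq, ih, compList, Function.comp]

lemma compList_differentiable (a : ℂ) (l : List ℕ) : Differentiable ℂ (compList a l) := by
  induction l with
  | nil => exact differentiable_id
  | cons e l ih =>
    have h : compList a (e :: l) = compList a l ∘ (fun z => a * z ^ e + 1) := rfl
    rw [h]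
    exact ih.comp (by fun_prop)

lemma deriv_S (a : ℂ) (e : ℕ) (p : ℂ) :
    deriv (fun z : ℂ => a * z ^ e + 1) p = a * e * p ^ (e - 1) := by
  rw [deriv_add_const, deriv_const_mul _ (differentiableAt_pow e), deriv_pow_field]
  ring

lemma deriv_compList_cons (a : ℂ) (e : ℕ) (l : List ℕ) (p : ℂ) :
    deriv (compList a (e :: l)) p
      = deriv (compList a l) (a * p ^ e + 1) * (a * e * p ^ (e - 1)) := by
  have h : compList a (e :: l) = compList a l ∘ (fun z => a * z ^ e + 1) := rfl
  rw [h, deriv_comp p (compList_differentiable a l _) (by fun_prop), deriv_S]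

lemma crit_split (a : ℂ) (ha0 : a ≠ 0) (l : List ℕ) (hl : ∀ e ∈ l, 2 ≤ e) (p : ℂ)
    (h : deriv (compList a l) p = 0) :
    ∃ l1 e l2, l = l1 ++ e :: l2 ∧ compList a l1 p = 0 := by
  induction l generalizing p with
  | nil =>
    have hid : compList a [] = id := rfl
    rw [hid, deriv_id] at h
    exact absurd h one_ne_zero
  | cons e l ih =>
    rw [deriv_compList_cons] at h
    rcases mul_eq_zero.1 h with h1 | h2
    · obtain ⟨l1, e', l2, heq, h0⟩ :=
        ih (fun x hx => hl x (List.mem_cons_of_mem _ hx)) _ h1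
      refine ⟨e :: l1, e', l2, by rw [heq, List.cons_append], ?_⟩
      simpa [compList] using h0
    · have he : (e : ℂ) ≠ 0 := by
        have : e ≠ 0 := by have := hl e List.mem_cons_self; omega
        exact_mod_cast this
      have hp : p ^ (e - 1) = 0 := by
        rcases mul_eq_zero.1 h2 with h3 | h4
        · rcases mul_eq_zero.1 h3 with h5 | h6
          · exact absurd h5 ha0
          · exact absurd h6 he
        · exact h4
      have hp0 : p = 0 := by
        have : e - 1 ≠ 0 := by have := hl e List.mem_cons_self; omega
        exact pow_eq_zero_iff this |>.1 hp
      exact ⟨[], e, l, rfl, hp0⟩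

/-- Polynomial (in `a`) version of the forward orbit. -/
noncomputable def polySeq : List ℕ → Polynomial ℚ → Polynomial ℚ
  | [], P => P
  | e :: l, P => polySeq l (Polynomial.X * P ^ e + 1)

lemma polySeq_aeval (a : ℂ) (l : List ℕ) (P : Polynomial ℚ) :
    (Polynomial.aeval a) (polySeq l P) = compList a l ((Polynomial.aeval a) P) := by
  induction l generalizing P with
  | nil => rfl
  | cons e l ih => simp [polySeq, compList, ih]

lemma polySeq_eval_zero (l : List ℕ) (hl : l ≠ []) (P : Polynomial ℚ) :
    (polySeq l P).eval 0 = 1 := by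
  induction l generalizing P with
  | nil => exact absurd rfl hl
  | cons e l ih =>
    cases l with
    | nil => simp [polySeq]
    | cons e' l' => exact ih (by simp) _

lemma compList_zero_ne_zero (a : ℂ) (ha : Transcendental ℚ a) (l : List ℕ) (hl : l ≠ []) :
    compList a l 0 ≠ 0 := by
  intro h
  have h0 : (Polynomial.aeval a) (polySeq l 0) = compList a l 0 := by
    simpa using polySeq_aeval a l 0
  have hne : polySeq l 0 ≠ 0 := by
    intro hh
    have := polySeq_eval_zero l hl 0
    rw [hh] at this
    simp at this
  exact ha ⟨polySeq l 0, hne, by rw [h0, h]⟩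

/-- If `a ∈ ℂ` is transcendental over `ℚ`, then for all `n ≥ 1` and all
degrees `d₀, …, d_{n-1} ≥ 2`, the composition `T = S_{d_{n-1}} ∘ ⋯ ∘ S_{d_0}` of the maps
`S_d(z) = a·z^d + 1` has no fixed critical point. -/
theorem no_fixed_critical_point
    (a : ℂ) (ha : Transcendental ℚ a)
    (n : ℕ) (hn : 1 ≤ n) (d : Fin n → ℕ) (hd : ∀ j, 2 ≤ d j) :
    ¬∃ p : ℂ, compSeq a n d p = p ∧ deriv (compSeq a n d) p = 0 := by
  rintro ⟨p, hfix, hcrit⟩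
  rw [compSeq_eq] at hfix hcrit
  set l := List.ofFn d with hldef
  have ha0 : a ≠ 0 := by
    intro h
    exact ha (h ▸ isAlgebraic_zero)
  have hl2 : ∀ e ∈ l, 2 ≤ e := by
    intro e he
    rw [hldef, List.mem_ofFn] at he
    obtain ⟨j, rfl⟩ := he
    exact hd j
  obtain ⟨l1, e, l2, heq, h0⟩ := crit_split a ha0 l hl2 p hcrit
  rw [heq, compList_append, h0] at hfix
  -- hfix : compList a (e :: l2) 0 = p
  have : compList a ((e :: l2) ++ l1) 0 = 0 := by
    rw [compList_append, hfix, h0]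
  exact compList_zero_ne_zero a ha ((e :: l2) ++ l1) (by simp) this
end

section
/- Let F be a finite set, 𝒜 a finite set of functions from F to F, and w : 𝒜 × F → (0, ∞). Suppose that for every ℓ ≥ 1, every sequence T_0, …, T_{ℓ−1} ∈ 𝒜, and every p ∈ F fixed by the composition T_{ℓ−1} ∘ ⋯ ∘ T_0, the cycle product ∏_{j=0}^{ℓ−1} w(T_j, (T_{j−1} ∘ ⋯ ∘ T_0)(p)) is strictly less than 1 (where the j = 0 factor is w(T_0, p)). Then there exists a function c : F → (0, ∞) such that w(T, p)·c(p)/c(T(p)) < 1 for every T ∈ 𝒜 and every p ∈ F. -/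
/-- Apply a list of maps in order: `applyList Tm [a₀, …, a_{ℓ-1}] p = (T_{ℓ-1} ∘ ⋯ ∘ T₀) p`. -/
def applyList {A F : Type*} (Tm : A → F → F) : List A → F → F
  | [], p => p
  | a :: L, p => applyList Tm L (Tm a p)

/-- The cycle product `∏_{j<ℓ} w(T_j, (T_{j-1} ∘ ⋯ ∘ T₀)(p))`. -/
def cycleProd {A F : Type*} (Tm : A → F → F) (w : A → F → ℝ) : List A → F → ℝ
  | [], _ => 1
  | a :: L, p => w a p * cycleProd Tm w L (Tm a p)

section Aux
variable {A F : Type*} (Tm : A → F → F) (w : A → F → ℝ)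

lemma applyList_append (L₁ L₂ : List A) (p : F) :
    applyList Tm (L₁ ++ L₂) p = applyList Tm L₂ (applyList Tm L₁ p) := by
  induction L₁ generalizing p with
  | nil => rfl
  | cons a L ih => simp [applyList, ih]

lemma cycleProd_append (L₁ L₂ : List A) (p : F) :
    cycleProd Tm w (L₁ ++ L₂) p
      = cycleProd Tm w L₁ p * cycleProd Tm w L₂ (applyList Tm L₁ p) := by
  induction L₁ generalizing p with
  | nil => simp [cycleProd, applyList]
  | cons a L ih => simp [cycleProd, applyList, ih]; ring

lemma cycleProd_pos (hw : ∀ a p, 0 < w a p) (L : List A) (p : F) :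
    0 < cycleProd Tm w L p := by
  induction L generalizing p with
  | nil => norm_num [cycleProd]
  | cons a L ih => exact mul_pos (hw a p) (ih _)

lemma cycleProd_smul (ε : ℝ) (L : List A) (p : F) :
    cycleProd Tm (fun a q => ε * w a q) L p = ε ^ L.length * cycleProd Tm w L p := by
  induction L generalizing p with
  | nil => simp [cycleProd]
  | cons a L ih => simp [cycleProd, ih, pow_succ]; ring

end Aux

def Mfun {A F : Type*} [Fintype A] [Nonempty A] (Tm : A → F → F) (w : A → F → ℝ) :
    ℕ → F → ℝ
  | 0, _ => 1
  | k + 1, p =>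
      max 1 (Finset.univ.sup' Finset.univ_nonempty fun a => w a p * Mfun Tm w k (Tm a p))

section Mf
variable {A F : Type*} [Fintype A] [Nonempty A] (Tm : A → F → F) (w : A → F → ℝ)

lemma one_le_Mfun (k : ℕ) (p : F) : (1 : ℝ) ≤ Mfun Tm w k p := by
  cases k with
  | zero => simp [Mfun]
  | succ k => exact le_max_left _ _

lemma cycleProd_le_Mfun (hw : ∀ a p, 0 < w a p) :
    ∀ (k : ℕ) (L : List A) (p : F), L.length ≤ k → cycleProd Tm w L p ≤ Mfun Tm w k p := by
  intro k
  induction k with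
  | zero =>
    intro L p hL
    rw [List.length_eq_zero_iff.mp (Nat.le_zero.mp hL)]
    simp [cycleProd, Mfun]
  | succ k ih =>
    intro L p hL
    cases L with
    | nil => simpa [cycleProd] using one_le_Mfun Tm w (k+1) p
    | cons a L =>
      simp only [List.length_cons, Nat.add_le_add_iff_right] at hL
      have h1 : cycleProd Tm w (a :: L) p ≤ w a p * Mfun Tm w k (Tm a p) := by
        have := ih L (Tm a p) hL
        simpa [cycleProd] using mul_le_mul_of_nonneg_left this (hw a p).le
      have hdef : Mfun Tm w (k+1) p
          = max 1 (Finset.univ.sup' Finset.univ_nonempty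
              fun a => w a p * Mfun Tm w k (Tm a p)) := rfl
      rw [hdef]
      exact h1.trans ((Finset.le_sup' (fun a => w a p * Mfun Tm w k (Tm a p)) (Finset.mem_univ a)).trans (le_max_right _ _))

lemma exists_Mfun_eq :
    ∀ (k : ℕ) (p : F), ∃ L : List A, L.length ≤ k ∧ Mfun Tm w k p = cycleProd Tm w L p := by
  intro k
  induction k with
  | zero => intro p; exact ⟨[], le_refl _, by simp [Mfun, cycleProd]⟩
  | succ k ih =>
    intro p
    obtain ⟨a, -, ha⟩ := Finset.exists_mem_eq_sup' (Finset.univ_nonempty (α := A))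
      (fun a => w a p * Mfun Tm w k (Tm a p))
    rcases le_or_gt (Finset.univ.sup' Finset.univ_nonempty
        fun a => w a p * Mfun Tm w k (Tm a p)) 1 with h | h
    · exact ⟨[], by simp, by simp [Mfun, cycleProd, max_eq_left h]⟩
    · obtain ⟨L, hL, hLeq⟩ := ih (Tm a p)
      refine ⟨a :: L, by simpa using hL, ?_⟩
      have hdef : Mfun Tm w (k+1) p
          = max 1 (Finset.univ.sup' Finset.univ_nonempty
              fun a => w a p * Mfun Tm w k (Tm a p)) := rfl
      rw [hdef, max_eq_right h.le, ha, hLeq]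
      rfl

/-- Cycle removal: if all short cycles have product ≤ 1, every path product is
bounded by the bounded-length max. -/
lemma cycleProd_le_Mfun_card [Fintype F] (hw : ∀ a p, 0 < w a p)
    (hcyc : ∀ L : List A, L ≠ [] → L.length ≤ Fintype.card F →
      ∀ p : F, applyList Tm L p = p → cycleProd Tm w L p ≤ 1) :
    ∀ (L : List A) (p : F), cycleProd Tm w L p ≤ Mfun Tm w (Fintype.card F) p := by
  set N := Fintype.card F with hN
  suffices h : ∀ (n : ℕ) (L : List A) (p : F), L.length ≤ n →
      cycleProd Tm w L p ≤ Mfun Tm w N p by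
    intro L p; exact h L.length L p le_rfl
  intro n
  induction n with
  | zero =>
    intro L p hL
    exact cycleProd_le_Mfun Tm w hw N L p (hL.trans (Nat.zero_le N))
  | succ n ih =>
    intro L p hL
    rcases le_or_gt L.length N with hshort | hlong
    · exact cycleProd_le_Mfun Tm w hw N L p hshort
    · -- pigeonhole on prefix images
      have hcard : Fintype.card F < Fintype.card (Fin (N + 1)) := by simp [hN]
      obtain ⟨i, j, hne, hij⟩ := Fintype.exists_ne_map_eq_of_card_lt
        (fun i : Fin (N + 1) => applyList Tm (L.take i) p) hcard
      wlog hlt : (i : ℕ) < (j : ℕ) generalizing i j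
      · exact this j i hne.symm hij.symm (by omega)
      have hjL : (j : ℕ) ≤ L.length := by omega
      set L₁ := L.take i with hL₁
      set L₂ := (L.take j).drop i with hL₂
      set L₃ := L.drop j with hL₃
      have htt : (L.take (j:ℕ)).take (i:ℕ) = L.take (i:ℕ) := by
        rw [List.take_take]; congr 1; omega
      have h12 : L₁ ++ L₂ = L.take (j:ℕ) := by
        rw [hL₁, hL₂, ← htt]; exact List.take_append_drop _ _
      have h123 : (L.take (j:ℕ)) ++ L₃ = L := List.take_append_drop _ _
      have hlen2 : L₂.length = (j : ℕ) - i := by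
        simp [hL₂, List.length_drop, List.length_take]
        omega
      have hL₂ne : L₂ ≠ [] := by
        refine List.ne_nil_of_length_pos ?_
        rw [hlen2]; omega
      set q := applyList Tm L₁ p with hq
      have hfix : applyList Tm L₂ q = q := by
        have h1 : applyList Tm (L₁ ++ L₂) p = applyList Tm L₂ (applyList Tm L₁ p) :=
          applyList_append ..
        rw [h12] at h1
        rw [hq, ← h1, ← hij, hq]
      have hcyc2 : cycleProd Tm w L₂ q ≤ 1 := by
        apply hcyc L₂ hL₂ne _ q hfix
        omega
      have hsplit : cycleProd Tm w L p
          = cycleProd Tm w L₁ p * cycleProd Tm w L₂ q * cycleProd Tm w L₃ q := by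
        conv_lhs => rw [← h123, ← h12]
        rw [cycleProd_append, cycleProd_append, applyList_append, ← hq, hfix]
        try ring
      have hred : cycleProd Tm w L p ≤ cycleProd Tm w (L₁ ++ L₃) p := by
        rw [hsplit, cycleProd_append, ← hq]
        try skip
        have h3pos := cycleProd_pos Tm w hw L₃ q
        have h1pos := cycleProd_pos Tm w hw L₁ p
        nlinarith [mul_le_mul_of_nonneg_left hcyc2 h1pos.le]
      refine hred.trans (ih (L₁ ++ L₃) p ?_)
      have : L₁.length = (i:ℕ) := by simp [hL₁]; omega
      have : L₃.length = L.length - j := by simp [hL₃]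
      simp only [List.length_append]
      omega

end Mf
/-- Let `F` be a finite set, `𝒜` a finite family of maps `F → F`, and
`w` a positive weight.  If along every cycle (every fixed point `p` of every nonempty
composition) the product of the weights is `< 1`, then there is a positive function
`c : F → (0, ∞)` with `w(T, p)·c(p)/c(T p) < 1` for all `T ∈ 𝒜` and `p ∈ F`. -/
theorem exists_scaling_of_cycleProd_lt_one
    {A F : Type*} [Fintype A] [Fintype F]
    (Tm : A → F → F) (w : A → F → ℝ) (hw : ∀ a p, 0 < w a p)
    (hcycle : ∀ L : List A, L ≠ [] → ∀ p : F, applyList Tm L p = p → cycleProd Tm w L p < 1) :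
    ∃ c : F → ℝ, (∀ p, 0 < c p) ∧ ∀ (a : A) (p : F), w a p * c p / c (Tm a p) < 1 := by
  classical
  rcases isEmpty_or_nonempty A with hA | hA
  · exact ⟨fun _ => 1, fun _ => one_pos, fun a => isEmptyElim a⟩
  rcases isEmpty_or_nonempty F with hF | hF
  · exact ⟨fun _ => 1, fun p => one_pos, fun a p => isEmptyElim p⟩
  set N := Fintype.card F with hN
  have hN0 : 0 < N := Fintype.card_pos
  haveI : Nonempty (((k : Fin (N + 1)) × (Fin (k : ℕ) → A)) × F) :=
    ⟨⟨⟨⟨0, by omega⟩, fun i => Classical.arbitrary A⟩, Classical.arbitrary F⟩⟩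
  -- the index type for short potential cycles
  set g : ((Σ k : Fin (N + 1), (Fin k → A)) × F) → ℝ := fun x =>
    if (List.ofFn x.1.2 ≠ [] ∧ applyList Tm (List.ofFn x.1.2) x.2 = x.2) then
      cycleProd Tm w (List.ofFn x.1.2) x.2
    else (1/2 : ℝ) with hg
  have hgpos : ∀ x, 0 < g x := by
    intro x
    rw [hg]
    dsimp only
    split
    · exact cycleProd_pos Tm w hw _ _
    · norm_num
  have hglt : ∀ x, g x < 1 := by
    intro x
    rw [hg]
    dsimp only
    split
    · exact hcycle _ (by tauto) _ (by tauto)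
    · norm_num
  set ρ : ℝ := Finset.univ.sup' Finset.univ_nonempty g with hρ
  have hρ1 : ρ < 1 := by
    rw [hρ, Finset.sup'_lt_iff]
    exact fun x _ => hglt x
  have hρ0 : 0 < ρ := by
    obtain ⟨x, -, hx⟩ := Finset.exists_mem_eq_sup' (Finset.univ_nonempty
      (α := ((Σ k : Fin (N + 1), (Fin k → A)) × F))) g
    rw [hρ, hx]; exact hgpos x
  have hρle : ∀ (L : List A) (p : F), L ≠ [] → L.length ≤ N →
      applyList Tm L p = p → cycleProd Tm w L p ≤ ρ := by
    intro L p hLne hLlen hLfix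
    have hofn : List.ofFn (fun i : Fin L.length => L.get i) = L := List.ofFn_get L
    set x : ((Σ k : Fin (N + 1), (Fin k → A)) × F) :=
      ⟨⟨⟨L.length, by omega⟩, fun i => L.get i⟩, p⟩ with hx
    have hgx : g x = cycleProd Tm w L p := by
      rw [hg]
      dsimp only [hx]
      rw [if_pos]
      · rw [hofn]
      · rw [hofn]; exact ⟨hLne, hLfix⟩
    rw [← hgx, hρ]
    exact Finset.le_sup' g (Finset.mem_univ x)
  -- the boost factor
  set ε : ℝ := ρ⁻¹ ^ ((N : ℝ)⁻¹) with hε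
  have hρinv : 1 < ρ⁻¹ := (one_lt_inv₀ hρ0).mpr hρ1
  have hε1 : 1 < ε := by
    rw [hε]
    exact Real.one_lt_rpow_iff_of_pos (by positivity) |>.mpr
      (Or.inl ⟨hρinv, by positivity⟩)
  have hεpow : ∀ ℓ : ℕ, ℓ ≤ N → ε ^ ℓ * ρ ≤ 1 := by
    intro ℓ hℓ
    have h1 : ε ^ ℓ ≤ ε ^ N := pow_le_pow_right₀ hε1.le hℓ
    have h2 : ε ^ N = ρ⁻¹ := by
      rw [hε, ← Real.rpow_natCast (ρ⁻¹ ^ ((N : ℝ)⁻¹)) N, ← Real.rpow_mul (by positivity)]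
      rw [inv_mul_cancel₀ (by exact_mod_cast hN0.ne')]
      exact Real.rpow_one _
    calc ε ^ ℓ * ρ ≤ ε ^ N * ρ := by nlinarith
      _ = 1 := by rw [h2]; field_simp
  set w' : A → F → ℝ := fun a q => ε * w a q with hw'def
  have hw' : ∀ a p, 0 < w' a p := fun a p => mul_pos (by positivity) (hw a p)
  have hcyc' : ∀ L : List A, L ≠ [] → L.length ≤ N →
      ∀ p : F, applyList Tm L p = p → cycleProd Tm w' L p ≤ 1 := by
    intro L hLne hLlen p hfix
    rw [hw'def, cycleProd_smul]
    have h1 : cycleProd Tm w L p ≤ ρ := hρle L p hLne hLlen hfix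
    have h2 : (0:ℝ) < ε ^ L.length := by positivity
    calc ε ^ L.length * cycleProd Tm w L p ≤ ε ^ L.length * ρ := by nlinarith
      _ ≤ 1 := hεpow _ hLlen
  set M : F → ℝ := Mfun Tm w' N with hM
  have hM1 : ∀ q, (1:ℝ) ≤ M q := fun q => one_le_Mfun Tm w' N q
  have hMpos : ∀ q, (0:ℝ) < M q := fun q => lt_of_lt_of_le one_pos (hM1 q)
  have key : ∀ (L : List A) (p : F), cycleProd Tm w' L p ≤ M p := by
    intro L p
    exact cycleProd_le_Mfun_card Tm w' hw' hcyc' L p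
  refine ⟨fun p => (M p)⁻¹, fun p => inv_pos.mpr (hMpos p), ?_⟩
  intro a p
  have step : ε * (w a p * M (Tm a p)) ≤ M p := by
    obtain ⟨L, hL, hLeq⟩ := exists_Mfun_eq Tm w' N (Tm a p)
    have : ε * (w a p * M (Tm a p)) = cycleProd Tm w' (a :: L) p := by
      rw [hM, hLeq]
      show ε * (w a p * cycleProd Tm w' L (Tm a p)) = w' a p * cycleProd Tm w' L (Tm a p)
      rw [hw'def]; ring
    rw [this]
    exact key (a :: L) p
  have hx : 0 < w a p * M (Tm a p) := mul_pos (hw a p) (hMpos (Tm a p))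
  have hstrict : w a p * M (Tm a p) < M p := by nlinarith
  have heq : w a p * (M p)⁻¹ / (M (Tm a p))⁻¹ = w a p * M (Tm a p) / M p := by
    field_simp
    try ring
  rw [heq, div_lt_one (hMpos p)]
  exact hstrict
end

section
/- Let r > 0 and let A ⊆ ℂ be a Lebesgue measurable set whose area (2-dimensional Lebesgue measure) satisfies λ(A) ≤ λ(B(0, r)), where B(0, r) is the open disk of radius r centered at 0. Then ∫_A (1 + |z|²)⁻² dλ(z) ≤ ∫_{B(0,r)} (1 + |z|²)⁻² dλ(z). Equivalently, among planar sets of a given Euclidean area, the disk centered at the origin maximizes spherical area. -/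
open MeasureTheory

/-- Among planar sets of a given Euclidean area, the disk centered at the
origin maximizes spherical area: if `λ(A) ≤ λ(B(0, r))` then
`∫_A (1 + |z|²)⁻² dλ ≤ ∫_{B(0,r)} (1 + |z|²)⁻² dλ`. -/
theorem spherical_area_le_of_area_le
    (r : ℝ) (hr : 0 < r) (A : Set ℂ) (hA : MeasurableSet A)
    (hvol : volume A ≤ volume (Metric.ball (0 : ℂ) r)) :
    ∫ z in A, ((1 + ‖z‖ ^ 2) ^ 2)⁻¹ ≤
      ∫ z in Metric.ball (0 : ℂ) r, ((1 + ‖z‖ ^ 2) ^ 2)⁻¹ := by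
  set B := Metric.ball (0 : ℂ) r with hB
  set f : ℂ → ℝ := fun z => ((1 + ‖z‖ ^ 2) ^ 2)⁻¹ with hf
  have hBmeas : MeasurableSet B := measurableSet_ball
  have hBfin : volume B ≠ ⊤ := (measure_ball_lt_top).ne
  have hAfin : volume A ≠ ⊤ := (lt_of_le_of_lt hvol measure_ball_lt_top).ne
  have hfc : Continuous f := by
    apply Continuous.inv₀
    · continuity
    · intro z
      positivity
  have hfbound : ∀ z : ℂ, f z ≤ 1 := by
    intro z
    rw [hf]
    simp only
    rw [inv_le_one_iff₀]
    right
    nlinarith [norm_nonneg z, sq_nonneg ‖z‖]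
  have hfnn : ∀ z : ℂ, 0 ≤ f z := by intro z; positivity
  -- integrability on any finite-measure set
  have hint : ∀ s : Set ℂ, volume s ≠ ⊤ → IntegrableOn f s := by
    intro s hs
    apply Measure.integrableOn_of_bounded hs hfc.aestronglyMeasurable
    filter_upwards with z
    rw [Real.norm_eq_abs, abs_of_nonneg (hfnn z)]
    exact hfbound z
  have hintA : IntegrableOn f A := hint A hAfin
  have hintB : IntegrableOn f B := hint B hBfin
  -- split integrals
  have hsplitA : (∫ z in A ∩ B, f z) + (∫ z in A \ B, f z) = ∫ z in A, f z :=
    integral_inter_add_diff hBmeas hintA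
  have hsplitB : (∫ z in B ∩ A, f z) + (∫ z in B \ A, f z) = ∫ z in B, f z :=
    integral_inter_add_diff hA hintB
  rw [Set.inter_comm] at hsplitB
  -- measure comparison
  have hμAB : volume (A \ B) ≤ volume (B \ A) := by
    have h1 : volume (A \ B) + volume (A ∩ B) = volume A := measure_diff_add_inter A hBmeas
    have h2 : volume (B \ A) + volume (B ∩ A) = volume B := measure_diff_add_inter B hA
    rw [Set.inter_comm] at h2
    have hABfin : volume (A ∩ B) ≠ ⊤ := by
      exact ((measure_mono Set.inter_subset_left).trans_lt hAfin.lt_top).ne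
    have : volume (A \ B) + volume (A ∩ B) ≤ volume (B \ A) + volume (A ∩ B) := by
      rw [h1, h2]; exact hvol
    exact ENNReal.le_of_add_le_add_right hABfin this
  set c : ℝ := ((1 + r ^ 2) ^ 2)⁻¹ with hc
  have hcpos : 0 < c := by positivity
  -- f ≤ c outside the ball
  have hfle : ∀ z ∈ A \ B, f z ≤ c := by
    rintro z ⟨-, hz⟩
    rw [hB, Metric.mem_ball, Complex.dist_eq, sub_zero, not_lt] at hz
    rw [hf, hc]
    simp only
    apply inv_anti₀ (by positivity)
    have h1 : (1 : ℝ) + r ^ 2 ≤ 1 + ‖z‖ ^ 2 := by nlinarith [norm_nonneg z]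
    exact pow_le_pow_left₀ (by positivity) h1 2
  -- c ≤ f inside the ball
  have hcle : ∀ z ∈ B \ A, c ≤ f z := by
    rintro z ⟨hz, -⟩
    rw [hB, Metric.mem_ball, Complex.dist_eq, sub_zero] at hz
    rw [hf, hc]
    simp only
    apply inv_anti₀ (by positivity)
    have h1 : (1 : ℝ) + ‖z‖ ^ 2 ≤ 1 + r ^ 2 := by nlinarith [norm_nonneg z]
    exact pow_le_pow_left₀ (by positivity) h1 2
  have hμABfin : volume (A \ B) ≠ ⊤ :=
    ((measure_mono Set.diff_subset).trans_lt hAfin.lt_top).ne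
  have hμBAfin : volume (B \ A) ≠ ⊤ :=
    ((measure_mono Set.diff_subset).trans_lt hBfin.lt_top).ne
  have h1 : (∫ z in A \ B, f z) ≤ c * (volume (A \ B)).toReal := by
    have := setIntegral_mono_on (hintA.mono_set Set.diff_subset)
      (integrableOn_const hμABfin) (hA.diff hBmeas) hfle
    rwa [setIntegral_const, smul_eq_mul, mul_comm, measureReal_def] at this
  have h2 : c * (volume (B \ A)).toReal ≤ ∫ z in B \ A, f z := by
    have := setIntegral_mono_on (integrableOn_const hμBAfin)
      (hintB.mono_set Set.diff_subset) (hBmeas.diff hA) hcle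
    rwa [setIntegral_const, smul_eq_mul, mul_comm, measureReal_def] at this
  have h3 : c * (volume (A \ B)).toReal ≤ c * (volume (B \ A)).toReal := by
    exact mul_le_mul_of_nonneg_left ((ENNReal.toReal_le_toReal hμABfin hμBAfin).mpr hμAB) hcpos.le
  have key : (∫ z in A \ B, f z) ≤ ∫ z in B \ A, f z := le_trans h1 (le_trans h3 h2)
  calc ∫ z in A, f z = (∫ z in A ∩ B, f z) + (∫ z in A \ B, f z) := hsplitA.symm
    _ ≤ (∫ z in A ∩ B, f z) + (∫ z in B \ A, f z) := by linarith
    _ = ∫ z in B, f z := hsplitB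
end

section
/- Let A, H > 0 and define Ψ : [0, ∞) → ℝ by Ψ(r) = A·r − (H/2)·r² for 0 ≤ r ≤ A/H and Ψ(r) = A²/(2H) for r > A/H. Let L > 0 and let f : [0, L] → [0, ∞) be differentiable with f(0) = 0 and f′(t)·max(A − H·f(t), 0) ≤ 1 for all t ∈ [0, L]. Then Ψ(f(t)) ≤ t for all t ∈ [0, L]. In particular, for every t with f(t) ≤ A/H one has t ≥ A·f(t) − (H/2)·f(t)². -/
private lemma hasDerivAt_sq_max (x : ℝ) :
    HasDerivAt (fun y : ℝ => (max y 0) ^ 2) (2 * max x 0) x := by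
  rcases lt_trichotomy x 0 with h | h | h
  · have hev : (fun _ : ℝ => (0 : ℝ)) =ᶠ[nhds x] fun y : ℝ => (max y 0) ^ 2 := by
      filter_upwards [Iio_mem_nhds h] with y hy
      simp [max_eq_right (le_of_lt (Set.mem_Iio.mp hy))]
    simpa [max_eq_right h.le] using (hasDerivAt_const x (0 : ℝ)).congr_of_eventuallyEq hev.symm
  · subst h
    rw [hasDerivAt_iff_isLittleO]
    simp only [max_self, ne_eq, OfNat.ofNat_ne_zero, not_false_eq_true, zero_pow, mul_zero,
      smul_zero, sub_zero]
    rw [Asymptotics.isLittleO_iff]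
    intro c hc
    filter_upwards [Metric.ball_mem_nhds (0 : ℝ) hc] with y hy
    have h1 : |max y 0| ≤ |y| := by
      rcases le_total y 0 with h' | h' <;> simp [max_eq_right, max_eq_left, h', abs_of_nonneg]
    have h2 : (max y 0) ^ 2 ≤ |y| ^ 2 := by
      rw [← sq_abs]; exact pow_le_pow_left₀ (abs_nonneg _) h1 2
    have h3 : |y| < c := by simpa [Real.dist_eq] using hy
    calc ‖(max y 0) ^ 2‖ = (max y 0) ^ 2 := by
            rw [Real.norm_eq_abs, abs_of_nonneg (sq_nonneg _)]
      _ ≤ |y| ^ 2 := h2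
      _ = |y| * |y| := sq (|y|) ▸ (sq |y|).symm ▸ (pow_two |y|)
      _ ≤ c * |y| := mul_le_mul_of_nonneg_right h3.le (abs_nonneg _)
      _ = c * ‖y‖ := by rw [Real.norm_eq_abs]
  · have hev : (fun y : ℝ => y ^ 2) =ᶠ[nhds x] fun y : ℝ => (max y 0) ^ 2 := by
      filter_upwards [Ioi_mem_nhds h] with y hy
      simp [max_eq_left (le_of_lt (Set.mem_Ioi.mp hy))]
    have := (hasDerivAt_pow 2 x).congr_of_eventuallyEq hev.symm
    simpa [max_eq_left h.le, mul_comm] using this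

private lemma hasDerivAt_Psi (A H : ℝ) (hH : 0 < H) (r : ℝ) :
    HasDerivAt (fun r : ℝ => A ^ 2 / (2 * H) - (max (A - H * r) 0) ^ 2 / (2 * H))
      (max (A - H * r) 0) r := by
  have hu : HasDerivAt (fun r : ℝ => A - H * r) (-H) r := by
    simpa using ((hasDerivAt_id r).const_mul H).const_sub A
  have hc : HasDerivAt (fun r : ℝ => (max (A - H * r) 0) ^ 2)
      (2 * max (A - H * r) 0 * (-H)) r :=
    by have := HasDerivAt.comp r (hasDerivAt_sq_max (A - H * r)) hu; exact this
  have := ((hc.div_const (2 * H)).const_sub (A ^ 2 / (2 * H)))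
  refine this.congr_deriv ?_
  field_simp

/-- Let `A, H > 0` and let `Ψ(r) = A·r − (H/2)·r²` for `0 ≤ r ≤ A/H`,
`Ψ(r) = A²/(2H)` for `r > A/H`.  If `f : [0, L] → [0, ∞)` is differentiable with
`f(0) = 0` and `f′(t) · max(A − H·f(t), 0) ≤ 1` on `[0, L]`, then `Ψ(f(t)) ≤ t` on
`[0, L]`; in particular `t ≥ A·f(t) − (H/2)·f(t)²` whenever `f(t) ≤ A/H`. -/
theorem ode_comparison_psi
    (A H : ℝ) (hA : 0 < A) (hH : 0 < H)
    (L : ℝ) (hL : 0 < L) (f f' : ℝ → ℝ)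
    (hderiv : ∀ t ∈ Set.Icc (0 : ℝ) L, HasDerivWithinAt f (f' t) (Set.Icc (0 : ℝ) L) t)
    (hnonneg : ∀ t ∈ Set.Icc (0 : ℝ) L, 0 ≤ f t)
    (hf0 : f 0 = 0)
    (hineq : ∀ t ∈ Set.Icc (0 : ℝ) L, f' t * max (A - H * f t) 0 ≤ 1) :
    (∀ t ∈ Set.Icc (0 : ℝ) L,
        (if f t ≤ A / H then A * f t - H / 2 * (f t) ^ 2 else A ^ 2 / (2 * H)) ≤ t) ∧
      ∀ t ∈ Set.Icc (0 : ℝ) L, f t ≤ A / H → A * f t - H / 2 * (f t) ^ 2 ≤ t := by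
  set Ψ : ℝ → ℝ := fun r => A ^ 2 / (2 * H) - (max (A - H * r) 0) ^ 2 / (2 * H) with hΨ
  set h : ℝ → ℝ := fun t => t - Ψ (f t) with hh
  -- derivative of h within Icc
  have hhd : ∀ t ∈ Set.Icc (0 : ℝ) L,
      HasDerivWithinAt h (1 - max (A - H * f t) 0 * f' t) (Set.Icc (0 : ℝ) L) t := by
    intro t ht
    have := (hasDerivAt_Psi A H hH (f t)).comp_hasDerivWithinAt t (hderiv t ht)
    exact (hasDerivWithinAt_id t _).sub this
  -- h is monotone on Icc 0 L
  have hmono : MonotoneOn h (Set.Icc (0 : ℝ) L) := by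
    apply monotoneOn_of_deriv_nonneg (convex_Icc 0 L)
    · intro t ht; exact (hhd t ht).continuousWithinAt
    · intro t ht
      rw [interior_Icc] at ht
      have hmem : Set.Icc (0 : ℝ) L ∈ nhds t := Icc_mem_nhds ht.1 ht.2
      exact ((hhd t (Set.mem_Icc.mpr ⟨ht.1.le, ht.2.le⟩)).hasDerivAt hmem).differentiableAt.differentiableWithinAt
    · intro t ht
      rw [interior_Icc] at ht
      have htI : t ∈ Set.Icc (0 : ℝ) L := ⟨ht.1.le, ht.2.le⟩
      have hmem : Set.Icc (0 : ℝ) L ∈ nhds t := Icc_mem_nhds ht.1 ht.2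
      have hd := (hhd t htI).hasDerivAt hmem
      rw [hd.deriv]
      have := hineq t htI
      nlinarith [this]
  -- value at 0
  have hΨ0 : Ψ (f 0) = 0 := by
    simp only [hΨ, hf0, mul_zero, sub_zero, max_eq_left hA.le]
    field_simp
    ring
  have key : ∀ t ∈ Set.Icc (0 : ℝ) L, Ψ (f t) ≤ t := by
    intro t ht
    have h0 : (0 : ℝ) ∈ Set.Icc (0 : ℝ) L := Set.mem_Icc.mpr ⟨le_refl 0, hL.le⟩
    have := hmono h0 ht ht.1
    simp only [hh, hΨ0, sub_zero] at this
    linarith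
  have hiff : ∀ t ∈ Set.Icc (0 : ℝ) L,
      (if f t ≤ A / H then A * f t - H / 2 * (f t) ^ 2 else A ^ 2 / (2 * H)) = Ψ (f t) := by
    intro t ht
    by_cases hc : f t ≤ A / H
    · rw [if_pos hc]
      have h1 : 0 ≤ A - H * f t := by
        rw [sub_nonneg]; rw [le_div_iff₀ hH] at hc; linarith
      simp only [hΨ, max_eq_left h1]
      field_simp
      ring
    · rw [if_neg hc]
      push_neg at hc
      have h1 : A - H * f t ≤ 0 := by
        rw [div_lt_iff₀ hH] at hc; linarith
      simp [hΨ, max_eq_right h1]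
  constructor
  · intro t ht; rw [hiff t ht]; exact key t ht
  · intro t ht hc
    have := key t ht
    have h2 := hiff t ht
    rw [if_pos hc] at h2
    rw [h2]
    exact this
end
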